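/- Let (G_j) be a sequence of finite connected BFS-labeled edge-transitive graphs of maximum degree at most d that converges pointwise to a graph Ḡ (i.e., the vertex sets and edge sets converge pointwise as subsets of ℕ and of pairs of naturals). Then Ḡ is connected and edge-transitive. -/

import Mathlib

open SimpleGraph

/-- A graph is edge-transitive if any edge can be mapped to any other edge
(as unordered pairs) by an automorphism. -/
def EdgeTransitive {V : Type*} (G : SimpleGraph V) : Prop :=
  ∀ ⦃a b c d : V⦄, G.Adj a b → G.Adj c d →
    ∃ σ : G ≃g G, (σ a = c ∧ σ b = d) ∨ (σ a = d ∧ σ b = c)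

open Filter Topology in
lemma diag (B : ℕ → ℕ) (f : ℕ → ℕ → ℕ) (hf : ∀ j w, f j w ≤ B w) :
    ∃ φ : ℕ → ℕ, StrictMono φ ∧ ∃ F : ℕ → ℕ, ∀ w, ∃ k₀, ∀ k ≥ k₀, f (φ k) w = F w := by
  set x : ℕ → Π w : ℕ, Fin (B w + 1) := fun j w => ⟨f j w, Nat.lt_succ_of_le (hf j w)⟩ with hx
  obtain ⟨a, φ, hφ, ha⟩ := SeqCompactSpace.tendsto_subseq x
  refine ⟨φ, hφ, fun w => (a w : ℕ), fun w => ?_⟩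
  have h := tendsto_pi_nhds.mp ha w
  rw [nhds_discrete, tendsto_pure] at h
  obtain ⟨k₀, hk⟩ := eventually_atTop.mp h
  exact ⟨k₀, fun k hk' => by have := hk k hk'; simpa [hx] using congrArg Fin.val this⟩


private lemma dist_tri {G : SimpleGraph ℕ} {u v w : ℕ} (h1 : G.Reachable u v)
    (h2 : G.Reachable v w) : G.dist u w ≤ G.dist u v + G.dist v w := by
  obtain ⟨p, hp⟩ := h1.exists_walk_length_eq_dist
  obtain ⟨q, hq⟩ := h2.exists_walk_length_eq_dist
  calc G.dist u w ≤ (p.append q).length := G.dist_le _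
    _ = _ := by rw [SimpleGraph.Walk.length_append, hp, hq]

private lemma pred_lemma {G : SimpleGraph ℕ} {u v : ℕ} (h : G.Reachable u v)
    (hd : G.dist u v ≠ 0) : ∃ w, G.Adj w v ∧ G.dist u w + 1 = G.dist u v := by
  obtain ⟨p, hp⟩ := h.exists_walk_length_eq_dist
  have hrev : p.reverse.length = G.dist u v := by rw [SimpleGraph.Walk.length_reverse, hp]
  cases hq : p.reverse with
  | nil => rw [hq] at hrev; simp at hrev; exact absurd SimpleGraph.dist_self hd
  | @cons _ x _ hadj q =>
    refine ⟨x, hadj.symm, ?_⟩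
    have hlen : q.length + 1 = G.dist u v := by rw [hq] at hrev; simpa using hrev
    have h1 : G.dist u x ≤ q.length := by
      have := G.dist_le q.reverse
      simpa using this
    have h2 : G.dist u v ≤ G.dist u x + 1 := by
      have hr : G.Reachable u x := ⟨q.reverse⟩
      obtain ⟨r, hrlen⟩ := hr.exists_walk_length_eq_dist
      have := G.dist_le (r.concat hadj.symm)
      rwa [SimpleGraph.Walk.length_concat, hrlen] at this
    omega

private lemma iso_dist_le {G : SimpleGraph ℕ} (σ : G ≃g G) (x y : ℕ) :
    G.dist (σ x) (σ y) ≤ G.dist x y := by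
  by_cases h : G.Reachable x y
  · obtain ⟨p, hp⟩ := h.exists_walk_length_eq_dist
    have := G.dist_le (p.map σ.toHom)
    rwa [SimpleGraph.Walk.length_map, hp] at this
  · rw [G.dist_eq_zero_of_not_reachable h]
    rw [G.dist_eq_zero_of_not_reachable]
    intro hr
    exact h (by simpa using hr.map σ.symm.toHom)

private lemma iso_dist {G : SimpleGraph ℕ} (σ : G ≃g G) (x y : ℕ) :
    G.dist (σ x) (σ y) = G.dist x y := by
  refine le_antisymm (iso_dist_le σ x y) ?_
  have := iso_dist_le σ.symm (σ x) (σ y)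
  simpa using this

section PerGraph
variable {G : SimpleGraph ℕ} {n d : ℕ}

private lemma reach_one (hne : 1 ≤ n) (hconn : (G.induce (Set.Icc 1 n)).Connected)
    {v : ℕ} (hv : v ∈ Set.Icc 1 n) : G.Reachable 1 v := by
  have h1 : (1 : ℕ) ∈ Set.Icc 1 n := ⟨le_refl 1, hne⟩
  have := hconn.preconnected ⟨1, h1⟩ ⟨v, hv⟩
  exact this.map (SimpleGraph.Embedding.induce (Set.Icc 1 n)).toHom

private lemma ball_card
    (hsupp : ∀ a b : ℕ, G.Adj a b → a ∈ Set.Icc 1 n ∧ b ∈ Set.Icc 1 n)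
    (hne : 1 ≤ n) (hconn : (G.induce (Set.Icc 1 n)).Connected)
    (hdeg : ∀ v : ℕ, (G.neighborSet v).ncard ≤ d) (r : ℕ) :
    ((Finset.Icc 1 n).filter (fun v => G.dist 1 v ≤ r)).card ≤ (d+1)^r := by
  have hnbfin : ∀ v : ℕ, (G.neighborSet v).Finite := fun v =>
    Set.Finite.subset (Set.finite_Icc 1 n) (fun x hx => (hsupp v x hx).2)
  induction r with
  | zero =>
    have hsub : (Finset.Icc 1 n).filter (fun v => G.dist 1 v ≤ 0) ⊆ {1} := by
      intro v hv
      simp only [Finset.mem_filter, Finset.mem_Icc] at hv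
      have hr := reach_one hne hconn (Set.mem_Icc.mpr ⟨hv.1.1, hv.1.2⟩)
      have : G.dist 1 v = 0 := Nat.le_zero.mp hv.2
      simp [Finset.mem_singleton, (hr.dist_eq_zero_iff).mp this |>.symm]
    simpa using Finset.card_le_card hsub
  | succ r ih =>
    set nb : ℕ → Finset ℕ := fun v => (hnbfin v).toFinset with hnb
    have hsub : (Finset.Icc 1 n).filter (fun v => G.dist 1 v ≤ r + 1) ⊆
        ((Finset.Icc 1 n).filter (fun v => G.dist 1 v ≤ r)).biUnion
          (fun u => insert u (nb u)) := by
      intro v hv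
      simp only [Finset.mem_filter, Finset.mem_Icc] at hv
      have hvIcc : v ∈ Set.Icc 1 n := Set.mem_Icc.mpr ⟨hv.1.1, hv.1.2⟩
      have hr := reach_one hne hconn hvIcc
      rcases Nat.eq_zero_or_pos (G.dist 1 v) with h0 | hpos
      · have hv1 : v = 1 := (hr.dist_eq_zero_iff.mp h0).symm
        refine Finset.mem_biUnion.mpr ⟨1, ?_, by simp [hv1]⟩
        simp only [Finset.mem_filter, Finset.mem_Icc]
        exact ⟨⟨le_refl 1, hne⟩, by simp [hv1 ▸ h0]⟩
      · obtain ⟨u, hadj, hdist⟩ := pred_lemma hr (by omega)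
        have huIcc := (hsupp u v hadj).1
        refine Finset.mem_biUnion.mpr ⟨u, ?_, ?_⟩
        · simp only [Finset.mem_filter, Finset.mem_Icc]
          exact ⟨⟨huIcc.1, huIcc.2⟩, by omega⟩
        · exact Finset.mem_insert.mpr (Or.inr (by simp only [hnb, Set.Finite.mem_toFinset, SimpleGraph.mem_neighborSet]; exact hadj))
    calc ((Finset.Icc 1 n).filter (fun v => G.dist 1 v ≤ r + 1)).card
        ≤ _ := Finset.card_le_card hsub
      _ ≤ ∑ u ∈ (Finset.Icc 1 n).filter (fun v => G.dist 1 v ≤ r), (insert u (nb u)).card :=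
          Finset.card_biUnion_le
      _ ≤ ∑ _u ∈ (Finset.Icc 1 n).filter (fun v => G.dist 1 v ≤ r), (d + 1) := by
          refine Finset.sum_le_sum fun u _ => ?_
          have h1 : (nb u).card ≤ d := by
            have := hdeg u
            rwa [Set.ncard_eq_toFinset_card _ (hnbfin u)] at this
          calc (insert u (nb u)).card ≤ (nb u).card + 1 := Finset.card_insert_le _ _
            _ ≤ d + 1 := by omega
      _ = ((Finset.Icc 1 n).filter (fun v => G.dist 1 v ≤ r)).card * (d+1) := by
          rw [Finset.sum_const, smul_eq_mul]
      _ ≤ (d+1)^r * (d+1) := Nat.mul_le_mul_right _ ih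
      _ = (d+1)^(r+1) := (pow_succ (d+1) r).symm

end PerGraph
section PerGraph2
variable {G : SimpleGraph ℕ} {n d : ℕ}

private lemma label_le
    (hsupp : ∀ a b : ℕ, G.Adj a b → a ∈ Set.Icc 1 n ∧ b ∈ Set.Icc 1 n)
    (hne : 1 ≤ n) (hconn : (G.induce (Set.Icc 1 n)).Connected)
    (hbfs : ∀ i k : ℕ, i ∈ Set.Icc 1 n → k ∈ Set.Icc 1 n → i < k → G.dist 1 i ≤ G.dist 1 k)
    (hdeg : ∀ v : ℕ, (G.neighborSet v).ncard ≤ d)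
    {v : ℕ} (hv : v ∈ Set.Icc 1 n) : v ≤ (d+1)^(G.dist 1 v) := by
  have hsub : Finset.Icc 1 v ⊆ (Finset.Icc 1 n).filter (fun w => G.dist 1 w ≤ G.dist 1 v) := by
    intro i hi
    simp only [Finset.mem_Icc] at hi
    have hiIcc : i ∈ Set.Icc 1 n := ⟨hi.1, le_trans hi.2 hv.2⟩
    simp only [Finset.mem_filter, Finset.mem_Icc]
    refine ⟨⟨hiIcc.1, hiIcc.2⟩, ?_⟩
    rcases lt_or_eq_of_le hi.2 with h | h
    · exact hbfs i v hiIcc hv h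
    · rw [h]
  have := Finset.card_le_card hsub
  rw [Nat.card_Icc] at this
  calc v = v + 1 - 1 := by omega
    _ ≤ _ := le_trans this (ball_card hsupp hne hconn hdeg _)

private lemma dist_lt
    (hsupp : ∀ a b : ℕ, G.Adj a b → a ∈ Set.Icc 1 n ∧ b ∈ Set.Icc 1 n)
    (hne : 1 ≤ n) (hconn : (G.induce (Set.Icc 1 n)).Connected)
    (hbfs : ∀ i k : ℕ, i ∈ Set.Icc 1 n → k ∈ Set.Icc 1 n → i < k → G.dist 1 i ≤ G.dist 1 k)
    {v : ℕ} (hv : v ∈ Set.Icc 1 n) : G.dist 1 v < v := by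
  set D := G.dist 1 v with hD
  have claim : ∀ k, k ≤ D → ∃ u, u ∈ Set.Icc 1 n ∧ u ≤ v ∧ G.dist 1 u = D - k := by
    intro k
    induction k with
    | zero => exact fun _ => ⟨v, hv, le_refl v, by omega⟩
    | succ k ih =>
      intro hk
      obtain ⟨u, huIcc, huv, hud⟩ := ih (by omega)
      have hr := reach_one hne hconn huIcc
      obtain ⟨w, hadj, hwd⟩ := pred_lemma hr (by omega)
      have hwIcc := (hsupp w u hadj).1
      refine ⟨w, hwIcc, ?_, by omega⟩
      by_contra hgt
      push_neg at hgt
      have := hbfs v w hv hwIcc hgt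
      omega
  have hsub : Finset.range (D+1) ⊆ (Finset.Icc 1 v).image (G.dist 1) := by
    intro t ht
    simp only [Finset.mem_range] at ht
    obtain ⟨u, huIcc, huv, hud⟩ := claim (D - t) (by omega)
    refine Finset.mem_image.mpr ⟨u, Finset.mem_Icc.mpr ⟨huIcc.1, huv⟩, by omega⟩
  have h1 := Finset.card_le_card hsub
  have h2 := Finset.card_image_le (s := Finset.Icc 1 v) (f := G.dist 1)
  rw [Finset.card_range] at h1
  rw [Nat.card_Icc] at h2
  have hv1 : 1 ≤ v := hv.1
  omega

end PerGraph2
section PerGraph3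
variable {G : SimpleGraph ℕ} {n d : ℕ}

private lemma exists_nbr (hne2 : 2 ≤ n) (hconn : (G.induce (Set.Icc 1 n)).Connected)
    {w : ℕ} (hw : w ∈ Set.Icc 1 n) : ∃ x, G.Adj w x := by
  have hne : 1 ≤ n := by omega
  have key : ∀ t : ℕ, t ∈ Set.Icc 1 n → w ≠ t → ∃ x, G.Adj w x := by
    intro t htIcc htne
    have hr : G.Reachable w t := (reach_one hne hconn hw).symm.trans (reach_one hne hconn htIcc)
    obtain ⟨p⟩ := hr
    cases p with
    | nil => exact absurd rfl htne
    | cons h q => exact ⟨_, h⟩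
  rcases eq_or_ne w 1 with h | h
  · exact key 2 ⟨by omega, by omega⟩ (by omega)
  · exact key 1 ⟨le_refl 1, hne⟩ h

private lemma iso_mem
    (hsupp : ∀ a b : ℕ, G.Adj a b → a ∈ Set.Icc 1 n ∧ b ∈ Set.Icc 1 n)
    (hne2 : 2 ≤ n) (hconn : (G.induce (Set.Icc 1 n)).Connected)
    (φ : G ≃g G) {w : ℕ} (hw : w ∈ Set.Icc 1 n) : φ w ∈ Set.Icc 1 n := by
  obtain ⟨x, hx⟩ := exists_nbr hne2 hconn hw
  have : G.Adj (φ w) (φ x) := φ.map_adj_iff.mpr hx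
  exact (hsupp _ _ this).1

private lemma iso_label_le
    (hsupp : ∀ a b : ℕ, G.Adj a b → a ∈ Set.Icc 1 n ∧ b ∈ Set.Icc 1 n)
    (hne : 1 ≤ n) (hconn : (G.induce (Set.Icc 1 n)).Connected)
    (hbfs : ∀ i k : ℕ, i ∈ Set.Icc 1 n → k ∈ Set.Icc 1 n → i < k → G.dist 1 i ≤ G.dist 1 k)
    (hdeg : ∀ v : ℕ, (G.neighborSet v).ncard ≤ d)
    (φ : G ≃g G) {p w : ℕ} (hp : p ∈ Set.Icc 1 n) (hw : w ∈ Set.Icc 1 n)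
    (hφp : φ p ∈ Set.Icc 1 n) (hφw : φ w ∈ Set.Icc 1 n) :
    φ w ≤ (d+2)^(φ p + p + w) := by
  have h1 : G.dist 1 (φ w) ≤ G.dist 1 (φ p) + G.dist (φ p) (φ w) :=
    dist_tri (reach_one hne hconn hφp)
      ((reach_one hne hconn hφp).symm.trans (reach_one hne hconn hφw))
  have h2 : G.dist (φ p) (φ w) = G.dist p w := iso_dist φ p w
  have h3 : G.dist p w ≤ G.dist p 1 + G.dist 1 w :=
    dist_tri (reach_one hne hconn hp).symm (reach_one hne hconn hw)
  have h4 : G.dist p 1 = G.dist 1 p := G.dist_comm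
  have d1 := dist_lt hsupp hne hconn hbfs hp
  have d2 := dist_lt hsupp hne hconn hbfs hw
  have d3 := dist_lt hsupp hne hconn hbfs hφp
  have hR : G.dist 1 (φ w) ≤ φ p + p + w := by omega
  calc φ w ≤ (d+1)^(G.dist 1 (φ w)) := label_le hsupp hne hconn hbfs hdeg hφw
    _ ≤ (d+2)^(G.dist 1 (φ w)) := Nat.pow_le_pow_left (by omega) _
    _ ≤ (d+2)^(φ p + p + w) := Nat.pow_le_pow_right (by omega) hR

end PerGraph3

/-- the pointwise limit of a sequence of finite connected BFS-labeled
edge-transitive graphs of maximum degree at most `d` is connected and edge-transitive.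
Each graph `G j` lives on the universe `ℕ` with (finite) vertex set `{1, …, n j}`, and
the limit graph `Ḡ` has vertex set `V̄`. -/
theorem stmt_17 (d : ℕ) (n : ℕ → ℕ) (G : ℕ → SimpleGraph ℕ)
    (Gbar : SimpleGraph ℕ) (Vbar : Set ℕ)
    -- each G j has vertex set {1,…,n j}
    (hsupp : ∀ j, ∀ a b : ℕ, (G j).Adj a b → a ∈ Set.Icc 1 (n j) ∧ b ∈ Set.Icc 1 (n j))
    (hne : ∀ j, 1 ≤ n j)
    -- connected
    (hconn : ∀ j, ((G j).induce (Set.Icc 1 (n j))).Connected)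
    -- BFS-labeled
    (hbfs : ∀ j, ∀ i k : ℕ, i ∈ Set.Icc 1 (n j) → k ∈ Set.Icc 1 (n j) → i < k →
      (G j).dist 1 i ≤ (G j).dist 1 k)
    -- maximum degree at most d
    (hdeg : ∀ j, ∀ v : ℕ, ((G j).neighborSet v).ncard ≤ d)
    -- edge-transitive
    (het : ∀ j, EdgeTransitive (G j))
    -- the edges of Ḡ lie within V̄
    (hbar : ∀ a b : ℕ, Gbar.Adj a b → a ∈ Vbar ∧ b ∈ Vbar)
    -- pointwise convergence of the vertex sets
    (hVconv : ∀ a : ℕ, ∃ j₀ : ℕ, ∀ j ≥ j₀, (a ∈ Set.Icc 1 (n j) ↔ a ∈ Vbar))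
    -- pointwise convergence of the edge sets
    (hEconv : ∀ a b : ℕ, ∃ j₀ : ℕ, ∀ j ≥ j₀, ((G j).Adj a b ↔ Gbar.Adj a b)) :
    (Gbar.induce Vbar).Connected ∧ EdgeTransitive Gbar := by
  classical
  have h1V : (1:ℕ) ∈ Vbar := by
    obtain ⟨j₀, hj⟩ := hVconv 1
    exact (hj j₀ le_rfl).mp ⟨le_rfl, hne j₀⟩
  -- Part 1 : connectivity
  have key : ∀ v, ∀ hv : v ∈ Vbar, (Gbar.induce Vbar).Reachable ⟨v, hv⟩ ⟨1, h1V⟩ := by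
    intro v hv
    set M := (d+2)^v with hM
    obtain ⟨j₀, hj₀⟩ := hVconv v
    set tE : ℕ × ℕ → ℕ := fun p => (hEconv p.1 p.2).choose with htE
    set tV : ℕ → ℕ := fun a => (hVconv a).choose with htV
    set J := max j₀ (max (((Finset.range (M+1)) ×ˢ (Finset.range (M+1))).sup tE)
      ((Finset.range (M+1)).sup tV)) with hJ
    have hvIcc : v ∈ Set.Icc 1 (n J) := (hj₀ J (le_max_left _ _)).mpr hv
    have hEstab : ∀ x y : ℕ, x ≤ M → y ≤ M → ((G J).Adj x y ↔ Gbar.Adj x y) := by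
      intro x y hx hy
      refine (hEconv x y).choose_spec J ?_
      have h1 : tE (x, y) ≤ (Finset.range (M+1) ×ˢ Finset.range (M+1)).sup tE :=
        Finset.le_sup (Finset.mem_product.mpr
          ⟨Finset.mem_range.mpr (by omega), Finset.mem_range.mpr (by omega)⟩)
      calc tE (x, y) ≤ _ := h1
        _ ≤ J := le_max_of_le_right (le_max_left _ _)
    have hVstab : ∀ x : ℕ, x ≤ M → (x ∈ Set.Icc 1 (n J) ↔ x ∈ Vbar) := by
      intro x hx
      refine (hVconv x).choose_spec J ?_
      have h1 : tV x ≤ (Finset.range (M+1)).sup tV :=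
        Finset.le_sup (Finset.mem_range.mpr (by omega))
      calc tV x ≤ _ := h1
        _ ≤ J := le_max_of_le_right (le_max_right _ _)
    have claim : ∀ k, k ≤ v → ∀ u, u ≤ M → ∀ huIcc : u ∈ Set.Icc 1 (n J),
        (G J).dist 1 u = k → ∀ hu : u ∈ Vbar,
        (Gbar.induce Vbar).Reachable ⟨u, hu⟩ ⟨1, h1V⟩ := by
      intro k
      induction k with
      | zero =>
        intro _ u _ huIcc hdist hu
        have hr := reach_one (hne J) (hconn J) huIcc
        have hu1 : 1 = u := hr.dist_eq_zero_iff.mp hdist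
        have : (⟨u, hu⟩ : ↥Vbar) = ⟨1, h1V⟩ := Subtype.ext hu1.symm
        rw [this]
      | succ k ih =>
        intro hkv u huM huIcc hdist hu
        have hr := reach_one (hne J) (hconn J) huIcc
        obtain ⟨w, hadj, hwd⟩ := pred_lemma hr (by omega)
        have hwIcc := (hsupp J w u hadj).1
        have hwM : w ≤ M := by
          calc w ≤ (d+1)^((G J).dist 1 w) :=
                label_le (hsupp J) (hne J) (hconn J) (hbfs J) (hdeg J) hwIcc
            _ ≤ (d+2)^((G J).dist 1 w) := Nat.pow_le_pow_left (by omega) _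
            _ ≤ (d+2)^v := Nat.pow_le_pow_right (by omega) (by omega)
        have hGadj : Gbar.Adj w u := (hEstab w u hwM huM).mp hadj
        have hwV : w ∈ Vbar := (hbar w u hGadj).1
        have hadj' : (Gbar.induce Vbar).Adj ⟨u, hu⟩ ⟨w, hwV⟩ := hGadj.symm
        exact (hadj'.reachable).trans (ih (by omega) w hwM hwIcc (by omega) hwV)
    have hvM : v ≤ M := le_of_lt (Nat.lt_pow_self (by omega : 1 < d + 2))
    have hdv : (G J).dist 1 v ≤ v :=
      le_of_lt (dist_lt (hsupp J) (hne J) (hconn J) (hbfs J) hvIcc)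
    exact claim ((G J).dist 1 v) hdv v hvM hvIcc rfl hv
  constructor
  · have hnonempty : Nonempty ↥Vbar := ⟨⟨1, h1V⟩⟩
    exact SimpleGraph.Connected.mk (fun x y => (key x.1 x.2).trans (key y.1 y.2).symm)
  · -- Part 2: edge-transitivity
    intro a b c e hab hce
    have haV : a ∈ Vbar := (hbar a b hab).1
    have hbV : b ∈ Vbar := (hbar a b hab).2
    have hcV : c ∈ Vbar := (hbar c e hce).1
    have heV : e ∈ Vbar := (hbar c e hce).2
    set j₁ := max (hEconv a b).choose (hEconv c e).choose with hj₁
    have hadj_ab : ∀ j, (G (j₁ + j)).Adj a b := fun j =>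
      ((hEconv a b).choose_spec (j₁ + j)
        (le_trans (le_max_left _ _) (Nat.le_add_right _ _))).mpr hab
    have hadj_ce : ∀ j, (G (j₁ + j)).Adj c e := fun j =>
      ((hEconv c e).choose_spec (j₁ + j)
        (le_trans (le_max_right _ _) (Nat.le_add_right _ _))).mpr hce
    have haI : ∀ j, a ∈ Set.Icc 1 (n (j₁+j)) := fun j => (hsupp _ a b (hadj_ab j)).1
    have hbI : ∀ j, b ∈ Set.Icc 1 (n (j₁+j)) := fun j => (hsupp _ a b (hadj_ab j)).2
    have hcI : ∀ j, c ∈ Set.Icc 1 (n (j₁+j)) := fun j => (hsupp _ c e (hadj_ce j)).1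
    have heI : ∀ j, e ∈ Set.Icc 1 (n (j₁+j)) := fun j => (hsupp _ c e (hadj_ce j)).2
    have hn2 : ∀ j, 2 ≤ n (j₁+j) := by
      intro j
      have h1 := haI j; have h2 := hbI j
      have hne' := (hadj_ab j).ne
      simp only [Set.mem_Icc] at h1 h2; omega
    set σ : ∀ j : ℕ, G (j₁+j) ≃g G (j₁+j) :=
      fun j => (het (j₁+j) (hadj_ab j) (hadj_ce j)).choose with hσdef
    have hσspec : ∀ j, (σ j a = c ∧ σ j b = e) ∨ (σ j a = e ∧ σ j b = c) := fun j =>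
      (het (j₁+j) (hadj_ab j) (hadj_ce j)).choose_spec
    set fσ : ℕ → ℕ → ℕ := fun j w => if w ∈ Set.Icc 1 (n (j₁+j)) then σ j w else 0 with hfσ
    set fτ : ℕ → ℕ → ℕ := fun j w => if w ∈ Set.Icc 1 (n (j₁+j)) then (σ j).symm w else 0 with hfτ
    set B : ℕ → ℕ := fun w => (d+2)^(a+b+c+e+w) with hB
    have hσI : ∀ j w, w ∈ Set.Icc 1 (n (j₁+j)) → σ j w ∈ Set.Icc 1 (n (j₁+j)) := fun j w hw =>
      iso_mem (hsupp _) (hn2 j) (hconn _) (σ j) hw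
    have hτI : ∀ j w, w ∈ Set.Icc 1 (n (j₁+j)) → (σ j).symm w ∈ Set.Icc 1 (n (j₁+j)) :=
      fun j w hw => iso_mem (hsupp _) (hn2 j) (hconn _) (σ j).symm hw
    have hfσB : ∀ j w, fσ j w ≤ B w := by
      intro j w
      simp only [hfσ]
      split
      · rename_i hw
        have h1 := iso_label_le (hsupp _) (hne _) (hconn _) (hbfs _) (hdeg _) (σ j)
          (haI j) hw (hσI j a (haI j)) (hσI j w hw)
        have h2 : σ j a + a + w ≤ a+b+c+e+w := by
          rcases hσspec j with ⟨h, _⟩ | ⟨h, _⟩ <;> rw [h] <;> omega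
        calc σ j w ≤ (d+2)^(σ j a + a + w) := h1
          _ ≤ B w := Nat.pow_le_pow_right (by omega) h2
      · exact Nat.zero_le _
    have hfτB : ∀ j w, fτ j w ≤ B w := by
      intro j w
      simp only [hfτ]
      split
      · rename_i hw
        have h1 := iso_label_le (hsupp _) (hne _) (hconn _) (hbfs _) (hdeg _) (σ j).symm
          (hcI j) hw (hτI j c (hcI j)) (hτI j w hw)
        have hsymm : (σ j).symm c = a ∨ (σ j).symm c = b := by
          rcases hσspec j with ⟨h, _⟩ | ⟨_, h⟩
          · left; rw [← h]; exact (σ j).symm_apply_apply a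
          · right; rw [← h]; exact (σ j).symm_apply_apply b
        have h2 : (σ j).symm c + c + w ≤ a+b+c+e+w := by
          rcases hsymm with h | h <;> rw [h] <;> omega
        calc (σ j).symm w ≤ (d+2)^((σ j).symm c + c + w) := h1
          _ ≤ B w := Nat.pow_le_pow_right (by omega) h2
      · exact Nat.zero_le _
    obtain ⟨φ₁, hφ₁, Fσ, hFσ1⟩ := diag B fσ hfσB
    obtain ⟨φ₂, hφ₂, Fτ, hFτ1⟩ := diag B (fun k w => fτ (φ₁ k) w) (fun k w => hfτB _ _)
    set ψ : ℕ → ℕ := fun k => φ₁ (φ₂ k) with hψ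
    have hψge : ∀ k, k ≤ ψ k := fun k => le_trans hφ₂.le_apply hφ₁.le_apply
    have hFσ : ∀ w, ∃ k₀, ∀ k ≥ k₀, fσ (ψ k) w = Fσ w := by
      intro w; obtain ⟨k₀, hk⟩ := hFσ1 w
      exact ⟨k₀, fun k hkk => hk (φ₂ k) (le_trans hkk hφ₂.le_apply)⟩
    have hFτ : ∀ w, ∃ k₀, ∀ k ≥ k₀, fτ (ψ k) w = Fτ w := fun w => hFτ1 w
    have hguard : ∀ w, w ∈ Vbar → ∃ k₀, ∀ k ≥ k₀, w ∈ Set.Icc 1 (n (j₁ + ψ k)) := by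
      intro w hw
      obtain ⟨j₀, hj⟩ := hVconv w
      exact ⟨j₀, fun k hk => (hj _ (by have := hψge k; omega)).mpr hw⟩
    have hEk : ∀ x y : ℕ, ∃ k₀, ∀ k ≥ k₀, ((G (j₁ + ψ k)).Adj x y ↔ Gbar.Adj x y) := by
      intro x y
      obtain ⟨j₀, hj⟩ := hEconv x y
      exact ⟨j₀, fun k hk => hj _ (by have := hψge k; omega)⟩
    have hVk : ∀ x : ℕ, ∃ k₀, ∀ k ≥ k₀, (x ∈ Set.Icc 1 (n (j₁ + ψ k)) ↔ x ∈ Vbar) := by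
      intro x
      obtain ⟨j₀, hj⟩ := hVconv x
      exact ⟨j₀, fun k hk => hj _ (by have := hψge k; omega)⟩
    -- (1) images stay in Vbar
    have hFσV : ∀ w, w ∈ Vbar → Fσ w ∈ Vbar := by
      intro w hw
      obtain ⟨k₁, h₁⟩ := hguard w hw
      obtain ⟨k₂, h₂⟩ := hFσ w
      obtain ⟨k₃, h₃⟩ := hVk (Fσ w)
      set k := max k₁ (max k₂ k₃) with hk
      have hg := h₁ k (by omega)
      have hmem : Fσ w ∈ Set.Icc 1 (n (j₁ + ψ k)) := by
        rw [← h₂ k (by omega)]; simp only [hfσ]; rw [if_pos hg]; exact hσI _ w hg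
      exact (h₃ k (by omega)).mp hmem
    have hFτV : ∀ w, w ∈ Vbar → Fτ w ∈ Vbar := by
      intro w hw
      obtain ⟨k₁, h₁⟩ := hguard w hw
      obtain ⟨k₂, h₂⟩ := hFτ w
      obtain ⟨k₃, h₃⟩ := hVk (Fτ w)
      set k := max k₁ (max k₂ k₃) with hk
      have hg := h₁ k (by omega)
      have hmem : Fτ w ∈ Set.Icc 1 (n (j₁ + ψ k)) := by
        rw [← h₂ k (by omega)]; simp only [hfτ]; rw [if_pos hg]; exact hτI _ w hg
      exact (h₃ k (by omega)).mp hmem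
    -- (2) inverse relations
    have hτσ : ∀ w, w ∈ Vbar → Fτ (Fσ w) = w := by
      intro w hw
      have hσV := hFσV w hw
      obtain ⟨k₁, h₁⟩ := hguard w hw
      obtain ⟨k₂, h₂⟩ := hFσ w
      obtain ⟨k₃, h₃⟩ := hguard (Fσ w) hσV
      obtain ⟨k₄, h₄⟩ := hFτ (Fσ w)
      set k := max (max k₁ k₂) (max k₃ k₄) with hk
      have hval : Fσ w = σ (ψ k) w := by
        rw [← h₂ k (by omega)]; simp only [hfσ]; rw [if_pos (h₁ k (by omega))]
      calc Fτ (Fσ w) = fτ (ψ k) (Fσ w) := (h₄ k (by omega)).symm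
        _ = (σ (ψ k)).symm (Fσ w) := by
            simp only [hfτ]; rw [if_pos (h₃ k (by omega))]
        _ = w := by rw [hval]; exact (σ (ψ k)).symm_apply_apply w
    have hστ : ∀ w, w ∈ Vbar → Fσ (Fτ w) = w := by
      intro w hw
      have hτV := hFτV w hw
      obtain ⟨k₁, h₁⟩ := hguard w hw
      obtain ⟨k₂, h₂⟩ := hFτ w
      obtain ⟨k₃, h₃⟩ := hguard (Fτ w) hτV
      obtain ⟨k₄, h₄⟩ := hFσ (Fτ w)
      set k := max (max k₁ k₂) (max k₃ k₄) with hk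
      have hval : Fτ w = (σ (ψ k)).symm w := by
        rw [← h₂ k (by omega)]; simp only [hfτ]; rw [if_pos (h₁ k (by omega))]
      calc Fσ (Fτ w) = fσ (ψ k) (Fτ w) := (h₄ k (by omega)).symm
        _ = σ (ψ k) (Fτ w) := by
            simp only [hfσ]; rw [if_pos (h₃ k (by omega))]
        _ = w := by rw [hval]; exact (σ (ψ k)).apply_symm_apply w
    -- (3) adjacency
    have hadjmap : ∀ w w', Gbar.Adj w w' → Gbar.Adj (Fσ w) (Fσ w') := by
      intro w w' hww'
      have hwV := (hbar _ _ hww').1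
      have hw'V := (hbar _ _ hww').2
      obtain ⟨k₁, h₁⟩ := hguard w hwV
      obtain ⟨k₂, h₂⟩ := hguard w' hw'V
      obtain ⟨k₃, h₃⟩ := hFσ w
      obtain ⟨k₄, h₄⟩ := hFσ w'
      obtain ⟨k₅, h₅⟩ := hEk w w'
      obtain ⟨k₆, h₆⟩ := hEk (Fσ w) (Fσ w')
      set k := max (max (max k₁ k₂) (max k₃ k₄)) (max k₅ k₆) with hk
      have hGadj : (G (j₁ + ψ k)).Adj w w' := (h₅ k (by omega)).mpr hww'
      have hval : Fσ w = σ (ψ k) w := by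
        rw [← h₃ k (by omega)]; simp only [hfσ]; rw [if_pos (h₁ k (by omega))]
      have hval' : Fσ w' = σ (ψ k) w' := by
        rw [← h₄ k (by omega)]; simp only [hfσ]; rw [if_pos (h₂ k (by omega))]
      have hadj2 : (G (j₁ + ψ k)).Adj (Fσ w) (Fσ w') := by
        rw [hval, hval']; exact (σ (ψ k)).map_adj_iff.mpr hGadj
      exact (h₆ k (by omega)).mp hadj2
    have hadjrev : ∀ w w', w ∈ Vbar → w' ∈ Vbar → Gbar.Adj (Fσ w) (Fσ w') → Gbar.Adj w w' := by
      intro w w' hwV hw'V h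
      obtain ⟨k₁, h₁⟩ := hguard w hwV
      obtain ⟨k₂, h₂⟩ := hguard w' hw'V
      obtain ⟨k₃, h₃⟩ := hFσ w
      obtain ⟨k₄, h₄⟩ := hFσ w'
      obtain ⟨k₅, h₅⟩ := hEk w w'
      obtain ⟨k₆, h₆⟩ := hEk (Fσ w) (Fσ w')
      set k := max (max (max k₁ k₂) (max k₃ k₄)) (max k₅ k₆) with hk
      have hval : Fσ w = σ (ψ k) w := by
        rw [← h₃ k (by omega)]; simp only [hfσ]; rw [if_pos (h₁ k (by omega))]
      have hval' : Fσ w' = σ (ψ k) w' := by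
        rw [← h₄ k (by omega)]; simp only [hfσ]; rw [if_pos (h₂ k (by omega))]
      have hadj2 : (G (j₁ + ψ k)).Adj (σ (ψ k) w) (σ (ψ k) w') := by
        rw [← hval, ← hval']; exact (h₆ k (by omega)).mpr h
      exact (h₅ k (by omega)).mp ((σ (ψ k)).map_adj_iff.mp hadj2)
    -- (4) the image of the edge {a,b}
    have h4 : (Fσ a = c ∧ Fσ b = e) ∨ (Fσ a = e ∧ Fσ b = c) := by
      obtain ⟨k₃, h₃⟩ := hFσ a
      obtain ⟨k₄, h₄⟩ := hFσ b
      set k := max k₃ k₄ with hk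
      have hvala : Fσ a = σ (ψ k) a := by
        rw [← h₃ k (by omega)]; simp only [hfσ]; rw [if_pos (haI (ψ k))]
      have hvalb : Fσ b = σ (ψ k) b := by
        rw [← h₄ k (by omega)]; simp only [hfσ]; rw [if_pos (hbI (ψ k))]
      rw [hvala, hvalb]
      exact hσspec (ψ k)
    -- assemble the automorphism
    set E : ℕ → ℕ := fun x => if x ∈ Vbar then Fσ x else x with hEdef
    set E' : ℕ → ℕ := fun x => if x ∈ Vbar then Fτ x else x with hE'def
    have hEleft : Function.LeftInverse E' E := by
      intro x
      by_cases hx : x ∈ Vbar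
      · simp only [hEdef, hE'def, if_pos hx, if_pos (hFσV x hx)]; exact hτσ x hx
      · simp only [hEdef, hE'def, if_neg hx]
    have hEright : Function.RightInverse E' E := by
      intro x
      by_cases hx : x ∈ Vbar
      · simp only [hEdef, hE'def, if_pos hx, if_pos (hFτV x hx)]; exact hστ x hx
      · simp only [hEdef, hE'def, if_neg hx]
    refine ⟨⟨⟨E, E', hEleft, hEright⟩, ?_⟩, ?_⟩
    · intro x y
      show Gbar.Adj (E x) (E y) ↔ Gbar.Adj x y
      constructor
      · intro h
        by_cases hx : x ∈ Vbar
        · by_cases hy : y ∈ Vbar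
          · simp only [hEdef, if_pos hx, if_pos hy] at h
            exact hadjrev x y hx hy h
          · exfalso
            have := (hbar _ _ h).2
            simp only [hEdef, if_neg hy] at this
            exact hy this
        · exfalso
          have := (hbar _ _ h).1
          simp only [hEdef, if_neg hx] at this
          exact hx this
      · intro h
        have hx := (hbar _ _ h).1
        have hy := (hbar _ _ h).2
        simp only [hEdef, if_pos hx, if_pos hy]
        exact hadjmap x y h
    · show ((if a ∈ Vbar then Fσ a else a) = c ∧ (if b ∈ Vbar then Fσ b else b) = e) ∨
        ((if a ∈ Vbar then Fσ a else a) = e ∧ (if b ∈ Vbar then Fσ b else b) = c)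
      rw [if_pos haV, if_pos hbV]
      exact h4
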